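/- For positive integers α, β and n, the n-fold integral (1/n!)·∫_{[0,1]^n} ∏_{i=1}^n x_i^{α−1}(1−x_i)^{β−1} · ∏_{1≤i<j≤n}(x_i−x_j)² dx_1···dx_n equals the determinant of the n×n Hankel matrix with (i,j) entry ∫_0^1 x^{α+i+j−3}(1−x)^{β−1} dx. -/

import Mathlib

open MeasureTheory Set Equiv Equiv.Perm Finset

/-- Heine's identity: for positive integers α, β, n,
`(1/n!)·∫_{[0,1]^n} ∏ x_i^{α−1}(1−x_i)^{β−1} ∏_{i<j}(x_i−x_j)² dx
  = det(∫_0^1 x^{α+i+j−3}(1−x)^{β−1} dx)` (1-based indices i, j). -/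

lemma pi_restrict_Icc {n : ℕ} :
    (volume : Measure (Fin n → ℝ)).restrict (Set.univ.pi fun _ => Set.Icc (0:ℝ) 1)
      = Measure.pi (fun _ : Fin n => (volume : Measure ℝ).restrict (Set.Icc 0 1)) := by
  rw [volume_pi]
  refine (Measure.pi_eq fun t ht => ?_).symm
  rw [Measure.restrict_apply (MeasurableSet.univ_pi ht), ← Set.pi_inter_distrib, Measure.pi_pi]
  simp [Measure.restrict_apply (ht _)]

lemma integral_pi_Icc {n : ℕ} (f : Fin n → ℝ → ℝ) :
    (∫ x : Fin n → ℝ in Set.univ.pi fun _ => Set.Icc (0:ℝ) 1, ∏ i, f i (x i))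
      = ∏ i, ∫ t in Set.Icc (0:ℝ) 1, f i t := by
  rw [pi_restrict_Icc]
  exact MeasureTheory.integral_fintype_prod_eq_prod (E := fun _ => ℝ) f
    (μ := fun _ => (volume : Measure ℝ).restrict (Set.Icc 0 1))

lemma integrable_pi_Icc {n : ℕ} (f : Fin n → ℝ → ℝ) (hf : ∀ i, IntegrableOn (f i) (Set.Icc 0 1)) :
    Integrable (fun x : Fin n → ℝ => ∏ i, f i (x i))
      ((volume : Measure (Fin n → ℝ)).restrict (Set.univ.pi fun _ => Set.Icc (0:ℝ) 1)) := by
  rw [pi_restrict_Icc]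
  exact MeasureTheory.Integrable.fintype_prod (f := f)
    (μ := fun _ => (volume : Measure ℝ).restrict (Set.Icc 0 1)) hf

lemma heine_core {n : ℕ} (w : ℝ → ℝ) (hw : Continuous w) :
    (∫ x : Fin n → ℝ in Set.univ.pi fun _ => Set.Icc (0:ℝ) 1,
        (∏ i, w (x i)) * ∏ i : Fin n, ∏ j ∈ Finset.Ioi i, (x i - x j) ^ 2)
    = (n.factorial : ℝ) * Matrix.det (Matrix.of fun i j : Fin n =>
        ∫ t in Set.Icc (0:ℝ) 1, t ^ (i.val + j.val) * w t) := by
  classical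
  set m : ℕ → ℝ := fun k => ∫ t in Set.Icc (0:ℝ) 1, t ^ k * w t with hm
  have key : ∀ x : Fin n → ℝ,
      (∏ i, w (x i)) * ∏ i : Fin n, ∏ j ∈ Finset.Ioi i, (x i - x j) ^ 2
      = ∑ p : Perm (Fin n) × Perm (Fin n),
          (((sign p.1 : ℤ) : ℝ) * ((sign p.2 : ℤ) : ℝ)) *
            ∏ i, (x i ^ ((p.1 i : Fin n).val + (p.2 i : Fin n).val) * w (x i)) := by
    intro x
    have h1 : ∏ i : Fin n, ∏ j ∈ Finset.Ioi i, (x i - x j) ^ 2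
        = ((Matrix.vandermonde x).det)^2 := by
      rw [Matrix.det_vandermonde, ← Finset.prod_pow]
      refine Finset.prod_congr rfl fun i _ => ?_
      rw [← Finset.prod_pow]
      exact Finset.prod_congr rfl fun j _ => by ring
    have h2 : (Matrix.vandermonde x).det
        = ∑ σ : Perm (Fin n), ((sign σ : ℤ) : ℝ) * ∏ i, x i ^ ((σ i : Fin n) : ℕ) := by
      rw [← Matrix.det_transpose, Matrix.det_apply']
      simp [Matrix.vandermonde]
    rw [h1, h2, sq, Finset.sum_mul_sum, Finset.mul_sum, Fintype.sum_prod_type]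
    refine Finset.sum_congr rfl fun σ _ => ?_
    rw [Finset.mul_sum]
    refine Finset.sum_congr rfl fun τ _ => ?_
    have h3 : ∏ i, (x i ^ ((σ i : Fin n).val + (τ i : Fin n).val) * w (x i))
        = ((∏ i, x i ^ ((σ i : Fin n) : ℕ)) * (∏ i, x i ^ ((τ i : Fin n) : ℕ)))
          * ∏ i, w (x i) := by
      rw [← Finset.prod_mul_distrib, ← Finset.prod_mul_distrib]
      exact Finset.prod_congr rfl fun i _ => by rw [pow_add]
    rw [h3]; ring
  have hInt : ∀ p : Perm (Fin n) × Perm (Fin n),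
      Integrable (fun x : Fin n → ℝ =>
        (((sign p.1 : ℤ) : ℝ) * ((sign p.2 : ℤ) : ℝ)) *
          ∏ i, (x i ^ ((p.1 i : Fin n).val + (p.2 i : Fin n).val) * w (x i)))
        ((volume : Measure (Fin n → ℝ)).restrict (Set.univ.pi fun _ => Set.Icc (0:ℝ) 1)) :=
    fun p => (integrable_pi_Icc _
      (fun i => ((continuous_pow _).mul hw).integrableOn_Icc)).const_mul _
  calc (∫ x : Fin n → ℝ in Set.univ.pi fun _ => Set.Icc (0:ℝ) 1,
        (∏ i, w (x i)) * ∏ i : Fin n, ∏ j ∈ Finset.Ioi i, (x i - x j) ^ 2)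
      = ∫ x : Fin n → ℝ in Set.univ.pi fun _ => Set.Icc (0:ℝ) 1,
          ∑ p : Perm (Fin n) × Perm (Fin n),
            (((sign p.1 : ℤ) : ℝ) * ((sign p.2 : ℤ) : ℝ)) *
              ∏ i, (x i ^ ((p.1 i : Fin n).val + (p.2 i : Fin n).val) * w (x i)) := by
        exact integral_congr_ae (Filter.Eventually.of_forall fun x => key x)
    _ = ∑ p : Perm (Fin n) × Perm (Fin n),
          (((sign p.1 : ℤ) : ℝ) * ((sign p.2 : ℤ) : ℝ)) *
            ∏ i, m ((p.1 i : Fin n).val + (p.2 i : Fin n).val) := by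
        rw [integral_finset_sum Finset.univ (fun p _ => hInt p)]
        refine Finset.sum_congr rfl fun p _ => ?_
        rw [integral_const_mul,
          integral_pi_Icc (fun i t => t ^ ((p.1 i : Fin n).val + (p.2 i : Fin n).val) * w t)]
    _ = ∑ σ : Perm (Fin n), ∑ τ : Perm (Fin n),
          (((sign σ : ℤ) : ℝ) * ((sign τ : ℤ) : ℝ)) *
            ∏ i, m ((σ i : Fin n).val + (τ i : Fin n).val) := by
        rw [Fintype.sum_prod_type]
    _ = ∑ _σ : Perm (Fin n),
          Matrix.det (Matrix.of fun i j : Fin n => m (i.val + j.val)) := by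
        refine Finset.sum_congr rfl fun σ _ => ?_
        rw [Matrix.det_apply',
          ← Equiv.sum_comp (Equiv.mulRight σ) (fun τ : Perm (Fin n) =>
            (((sign σ : ℤ) : ℝ) * ((sign τ : ℤ) : ℝ)) *
              ∏ i, m ((σ i : Fin n).val + (τ i : Fin n).val))]
        refine Finset.sum_congr rfl fun ρ _ => ?_
        have hs : ((sign σ : ℤ) : ℝ) * ((sign (Equiv.mulRight σ ρ) : ℤ) : ℝ)
            = ((sign ρ : ℤ) : ℝ) := by
          simp only [Equiv.coe_mulRight, Equiv.Perm.sign_mul]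
          rcases Int.units_eq_one_or (sign σ) with h | h <;> simp [h]
        have hp : ∏ i, m ((σ i : Fin n).val + ((Equiv.mulRight σ ρ) i : Fin n).val)
            = ∏ i, m ((ρ i : Fin n).val + (i : Fin n).val) := by
          rw [← Equiv.prod_comp σ (fun j : Fin n => m ((ρ j : Fin n).val + (j : Fin n).val))]
          exact Finset.prod_congr rfl fun i _ => by
            simp [Equiv.coe_mulRight, Perm.mul_apply, Nat.add_comm]
        rw [hs, hp]
        simp [Matrix.of_apply]
    _ = (n.factorial : ℝ) * Matrix.det (Matrix.of fun i j : Fin n => m (i.val + j.val)) := by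
        rw [Finset.sum_const, Finset.card_univ, Fintype.card_perm, Fintype.card_fin,
          nsmul_eq_mul]

theorem heine_identity (α β n : ℕ) (hα : 0 < α) (hβ : 0 < β) (hn : 0 < n) :
    (1 / (n.factorial : ℝ)) *
      ∫ x : Fin n → ℝ in Set.univ.pi (fun _ => Set.Icc (0 : ℝ) 1),
        (∏ i, x i ^ (α - 1) * (1 - x i) ^ (β - 1)) *
          ∏ i : Fin n, ∏ j ∈ Finset.Ioi i, (x i - x j) ^ 2 =
    Matrix.det (Matrix.of fun i j : Fin n =>
      ∫ t in Set.Icc (0 : ℝ) 1, t ^ (α + i.val + j.val - 1) * (1 - t) ^ (β - 1)) := by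
  have hw : Continuous (fun t : ℝ => t ^ (α - 1) * (1 - t) ^ (β - 1)) := by fun_prop
  have h := heine_core (n := n) (fun t : ℝ => t ^ (α - 1) * (1 - t) ^ (β - 1)) hw
  rw [h]
  have hM : (Matrix.of fun i j : Fin n =>
        ∫ t in Set.Icc (0:ℝ) 1, t ^ (i.val + j.val) * (t ^ (α - 1) * (1 - t) ^ (β - 1)))
      = (Matrix.of fun i j : Fin n =>
        ∫ t in Set.Icc (0 : ℝ) 1, t ^ (α + i.val + j.val - 1) * (1 - t) ^ (β - 1)) := by
    ext i j
    simp only [Matrix.of_apply]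
    refine integral_congr_ae (Filter.Eventually.of_forall fun t => ?_)
    show t ^ ((i : ℕ) + (j : ℕ)) * (t ^ (α - 1) * (1 - t) ^ (β - 1)) = _
    rw [← mul_assoc, ← pow_add]
    congr 2
    omega
  rw [hM, ← mul_assoc, one_div,
    inv_mul_cancel₀ (Nat.cast_ne_zero.mpr n.factorial_ne_zero), one_mul]
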